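/- Let $t \geq 1$, $S = \{2^0, \ldots, 2^{t-1}\}$, $\tau = 2^t - 1$, and let $t' < t$. Then for every function $y : \{1,\ldots,t'\} \to S$ and every function $f : \{1,\ldots,t\} \to \{1,\ldots,t'\}$, the sum $\sum_{c=1}^{t} y(f(c))$ is not divisible by $\tau$. -/

import Mathlib

lemma sum_two_pow' (n : ℕ) : ∑ i ∈ Finset.range n, 2 ^ i = 2 ^ n - 1 := by
  induction n with
  | zero => simp
  | succ n ih =>
    rw [Finset.sum_range_succ, ih]
    have : 1 ≤ 2 ^ n := Nat.one_le_two_pow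
    rw [pow_succ]; omega

lemma key' (t : ℕ) : ∀ n (M : Multiset ℕ), M.card = n → (∀ i ∈ M, i < t) → M ≠ 0 →
    M.card ≤ t → (2 ^ t - 1 ∣ (M.map (2 ^ ·)).sum) → M.Nodup := by
  intro n
  induction n using Nat.strong_induction_on with
  | _ n ih =>
    intro M hcard hlt hne hle hdvd
    by_contra hnd
    rw [Multiset.nodup_iff_count_le_one] at hnd
    push_neg at hnd
    obtain ⟨a, ha⟩ := hnd
    have h2 : Multiset.replicate 2 a ≤ M := by
      rw [Multiset.le_iff_count]
      intro b
      rcases eq_or_ne b a with rfl | hb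
      · simp; omega
      · simp [Multiset.count_replicate, hb]
    obtain ⟨u, hu⟩ := Multiset.le_iff_exists_add.mp h2
    have hat : a < t := hlt a (by rw [hu]; simp [Multiset.mem_replicate])
    have ht : 0 < t := by omega
    set N : Multiset ℕ := ((a+1) % t) ::ₘ u with hN
    have hsumM : (M.map (2 ^ ·)).sum = 2 ^ (a+1) + (u.map (2 ^ ·)).sum := by
      rw [hu]
      simp [Multiset.replicate_succ, pow_succ, two_mul]
      ring
    have hsumN : (N.map (2 ^ ·)).sum = 2 ^ ((a+1) % t) + (u.map (2 ^ ·)).sum := by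
      simp [hN]
    have hk : 2 ^ (a+1) = 2 ^ ((a+1) % t) ∨
        2 ^ (a+1) = 2 ^ ((a+1) % t) + (2 ^ t - 1) := by
      rcases Nat.lt_or_ge (a+1) t with hlt' | hge
      · left; rw [Nat.mod_eq_of_lt hlt']
      · have heq : a + 1 = t := le_antisymm hat hge
        right
        subst heq
        simp [Nat.mod_self]
        have : 1 ≤ 2 ^ (a+1) := Nat.one_le_two_pow
        omega
    have hdvdN : 2 ^ t - 1 ∣ (N.map (2 ^ ·)).sum := by
      rcases hk with hk | hk
      · rw [hsumN, ← hk, ← hsumM]; exact hdvd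
      · have heq : (M.map (2 ^ ·)).sum = (N.map (2 ^ ·)).sum + (2 ^ t - 1) := by
          rw [hsumM, hsumN, hk]; ring
        rw [heq, add_comm] at hdvd
        exact (Nat.dvd_add_right (dvd_refl _)).mp hdvd
    have hcardu : M.card = u.card + 2 := by rw [hu]; simp
    have hNcard : N.card = n - 1 := by simp [hN]; omega
    have hNlt : ∀ i ∈ N, i < t := by
      intro i hi
      rcases Multiset.mem_cons.mp hi with rfl | hi
      · exact Nat.mod_lt _ ht
      · exact hlt i (by rw [hu]; exact Multiset.mem_add.mpr (Or.inr hi))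
    have hNnodup : N.Nodup := ih (n-1) (by omega) N hNcard hNlt
      (by simp [hN]) (by omega) hdvdN
    -- N nodup, card ≤ t - 1, so its power sum is 0 < s < 2^t - 1, contradicting dvd
    have hfin : N.toFinset ⊆ Finset.range t := fun i hi =>
      Finset.mem_range.mpr (hNlt i (Multiset.mem_toFinset.mp hi))
    have hsumEq : (N.map (2 ^ ·)).sum = ∑ i ∈ N.toFinset, 2 ^ i := by
      rw [Finset.sum_eq_multiset_sum]
      congr 1
      rw [Multiset.toFinset_val]
      exact congrArg _ (Multiset.Nodup.dedup hNnodup).symm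
    have hcards : N.toFinset.card = N.card := Multiset.toFinset_card_of_nodup hNnodup
    have hcardlt : N.toFinset.card < (Finset.range t).card := by
      rw [hcards, hNcard, Finset.card_range]; omega
    obtain ⟨i, hit, his⟩ := Finset.exists_of_ssubset
      (Finset.ssubset_iff_subset_ne.mpr ⟨hfin, fun he => by rw [he] at hcardlt; omega⟩)
    have hlt2 : ∑ j ∈ N.toFinset, 2 ^ j < ∑ j ∈ Finset.range t, 2 ^ j :=
      Finset.sum_lt_sum_of_subset hfin hit his (Nat.one_le_two_pow)
        (fun j _ _ => Nat.zero_le _)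
    have hpos : 0 < (N.map (2 ^ ·)).sum := by
      rw [hsumN]
      have : 0 < 2 ^ ((a+1) % t) := Nat.pow_pos (by norm_num)
      omega
    rw [sum_two_pow'] at hlt2
    rw [hsumEq] at hdvdN hpos
    have := Nat.eq_zero_of_dvd_of_lt hdvdN hlt2
    omega

/-- With `S = {2^0, …, 2^{t-1}}`, `τ = 2^t - 1` and `t' < t`, for every
`y : {1,…,t'} → S` and every `f : {1,…,t} → {1,…,t'}`, the sum `∑_c y(f(c))` is not
divisible by `τ`. -/
theorem stmt5 (t t' : ℕ) (h : t' < t) (y : Fin t' → ℕ)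
    (hy : ∀ i, y i ∈ (Finset.range t).image (2 ^ ·)) (f : Fin t → Fin t') :
    ¬ (2 ^ t - 1 ∣ ∑ c : Fin t, y (f c)) := by
  intro hdvd
  choose e he1 he2 using fun i => Finset.mem_image.mp (hy i)
  simp only [Finset.mem_range] at he1
  set M : Multiset ℕ := Finset.univ.val.map (fun c : Fin t => e (f c)) with hM
  have hMcard : M.card = t := by simp [hM]
  have hsum : (M.map (2 ^ ·)).sum = ∑ c : Fin t, y (f c) := by
    rw [hM, Multiset.map_map]
    rw [Finset.sum_eq_multiset_sum]
    congr 1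
    apply Multiset.map_congr rfl
    intro c _
    exact he2 (f c)
  have hnodup : M.Nodup := key' t t M hMcard
    (fun i hi => by
      obtain ⟨c, _, rfl⟩ := Multiset.mem_map.mp hi
      exact he1 (f c))
    (by intro h0; rw [h0] at hMcard; simp at hMcard; omega)
    (le_of_eq hMcard) (by rw [hsum]; exact hdvd)
  have hinj : Function.Injective (fun c : Fin t => e (f c)) := by
    intro c₁ c₂ hc
    have := Multiset.inj_on_of_nodup_map hnodup c₁ (by simp [Multiset.mem_map]) c₂
      (by simp) hc
    exact this
  have hfinj : Function.Injective f := fun c₁ c₂ hc => hinj (by simp [hc])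
  have := Fintype.card_le_of_injective f hfinj
  simp at this
  omega
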